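/- Let k be an algebraically closed field and n ≥ 1. Consider the set S of semisimple (i.e., diagonalizable) elements of GL(n,k), with the equivalence relation on S given by z-equivalence in GL(n,k) (two elements of S are related iff their centralizers in GL(n,k) are conjugate by an element of GL(n,k)). Then the number of equivalence classes of S under this relation equals p(n), the number of partitions of n. -/

import Mathlib

open Matrix

/-- The z-classes in the ambient group `G` of elements of a subset `S ⊆ G`: two elements
of `S` are z-equivalent when their centralizers in `G` are conjugate by an element of `G`.
`zQuotSub S` is the quotient of `S` by this relation. -/
def zQuotSub {G : Type*} [Group G] (S : Set G) : Type _ :=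
  Quot (fun x y : S => ∃ g : G,
    {h : G | h * (y : G) = (y : G) * h}
      = (fun h => g * h * g⁻¹) '' {h : G | h * (x : G) = (x : G) * h})

namespace ZAux

open Finset

open scoped Classical

variable {k : Type*} [Field k] {n : ℕ}

/-- invertible matrices whose entries vanish off the "blocks" of `d`. -/
def SetA (d : Fin n → k) : Set (Matrix (Fin n) (Fin n) k)ˣ :=
  {h | ∀ i j, d i ≠ d j → (↑h : Matrix (Fin n) (Fin n) k) i j = 0}

/-- centralizer set of `x` in the unit group -/
def ZSet (x : (Matrix (Fin n) (Fin n) k)ˣ) : Set (Matrix (Fin n) (Fin n) k)ˣ :=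
  {h | h * x = x * h}

/-- matrices commuting with every unit in `X` -/
def comm (X : Set (Matrix (Fin n) (Fin n) k)ˣ) : Set (Matrix (Fin n) (Fin n) k) :=
  {M | ∀ h ∈ X, M * (h : Matrix (Fin n) (Fin n) k) = (h : Matrix (Fin n) (Fin n) k) * M}

/-- diagonal matrices constant on the fibers of `d` -/
def DSet (d : Fin n → k) : Set (Matrix (Fin n) (Fin n) k) :=
  {M | (∀ i j, i ≠ j → M i j = 0) ∧ ∀ i j, d i = d j → M i i = M j j}

/-- minimal nonzero idempotents of a set of matrices -/
def minIdem (D : Set (Matrix (Fin n) (Fin n) k)) : Set (Matrix (Fin n) (Fin n) k) :=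
  {e | e ∈ D ∧ e * e = e ∧ e ≠ 0 ∧
    ∀ e' ∈ D, e' * e' = e' → e' * e = e' → e' ≠ 0 → e' = e}

noncomputable def rmul (x : (Matrix (Fin n) (Fin n) k)ˣ) : Multiset ℕ :=
  if h : (minIdem (comm (ZSet x))).Finite then h.toFinset.val.map Matrix.rank else 0

noncomputable def fsm (d : Fin n → k) : Multiset ℕ :=
  (Finset.univ.image d).val.map (fun v => (Finset.univ.filter (fun i => d i = v)).card)

noncomputable def indic (d : Fin n → k) (v : k) : Matrix (Fin n) (Fin n) k :=
  diagonal (fun i => if d i = v then 1 else 0)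


/-- unit with diagonal value -/
noncomputable def diagUnit (d : Fin n → k) (hd : ∀ i, d i ≠ 0) : (Matrix (Fin n) (Fin n) k)ˣ where
  val := diagonal d
  inv := diagonal (fun i => (d i)⁻¹)
  val_inv := by
    rw [diagonal_mul_diagonal]
    convert diagonal_one using 2
    funext i
    exact mul_inv_cancel₀ (hd i)
  inv_val := by
    rw [diagonal_mul_diagonal]
    convert diagonal_one using 2
    funext i
    exact inv_mul_cancel₀ (hd i)

/-- permutation matrix unit -/
noncomputable def permUnit (τ : Equiv.Perm (Fin n)) : (Matrix (Fin n) (Fin n) k)ˣ where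
  val := τ.toPEquiv.toMatrix
  inv := τ.symm.toPEquiv.toMatrix
  val_inv := by
    rw [← PEquiv.toMatrix_trans, ← Equiv.toPEquiv_trans]
    simp
  inv_val := by
    rw [← PEquiv.toMatrix_trans, ← Equiv.toPEquiv_trans]
    simp

/-- transvection unit 1 + E i j -/
noncomputable def transvUnit (i j : Fin n) (hij : i ≠ j) : (Matrix (Fin n) (Fin n) k)ˣ where
  val := 1 + Matrix.single i j 1
  inv := 1 - Matrix.single i j 1
  val_inv := by
    have h0 : Matrix.single i j (1:k) * Matrix.single i j 1 = 0 :=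
      Matrix.single_mul_single_of_ne _ _ _ _ (Ne.symm hij) _
    rw [mul_sub, add_mul, add_mul, h0]
    noncomm_ring
  inv_val := by
    have h0 : Matrix.single i j (1:k) * Matrix.single i j 1 = 0 :=
      Matrix.single_mul_single_of_ne _ _ _ _ (Ne.symm hij) _
    rw [sub_mul, mul_add, mul_add, h0]
    noncomm_ring


/-- centralizers of conjugate elements are conjugate -/
theorem zset_conj {G : Type*} [Group G] (x g : G) :
    {h : G | h * (g * x * g⁻¹) = (g * x * g⁻¹) * h}
      = (fun h => g * h * g⁻¹) '' {h : G | h * x = x * h} := by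
  ext h
  constructor
  · intro hh
    refine ⟨g⁻¹ * h * g, ?_, by group⟩
    show (g⁻¹ * h * g) * x = x * (g⁻¹ * h * g)
    have hh' : h * (g * x * g⁻¹) = g * x * g⁻¹ * h := hh
    calc (g⁻¹ * h * g) * x = g⁻¹ * (h * (g * x * g⁻¹)) * g := by group
    _ = g⁻¹ * (g * x * g⁻¹ * h) * g := by rw [hh']
    _ = x * (g⁻¹ * h * g) := by group
  · rintro ⟨h', hh', rfl⟩
    simp only [Set.mem_setOf_eq] at hh' ⊢
    calc g * h' * g⁻¹ * (g * x * g⁻¹) = g * (h' * x) * g⁻¹ := by group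
    _ = g * (x * h') * g⁻¹ := by rw [hh']
    _ = g * x * g⁻¹ * (g * h' * g⁻¹) := by group

theorem zset_diag {d : Fin n → k} {u : (Matrix (Fin n) (Fin n) k)ˣ}
    (hu : (u : Matrix (Fin n) (Fin n) k) = diagonal d) : ZSet u = SetA d := by
  ext h
  have : (h * u = u * h) ↔ ((h : Matrix (Fin n) (Fin n) k) * diagonal d = diagonal d * h) := by
    rw [← hu]
    constructor
    · intro he; exact_mod_cast congrArg Units.val he
    · intro he; ext1; exact_mod_cast he
  simp only [ZSet, SetA, Set.mem_setOf_eq, this]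
  constructor
  · intro he i j hij
    have := Matrix.ext_iff.2 he i j
    rw [mul_diagonal, diagonal_mul] at this
    have h2 : (h : Matrix (Fin n) (Fin n) k) i j * (d j - d i) = 0 := by ring_nf; linear_combination this
    rcases mul_eq_zero.1 h2 with h3 | h3
    · exact h3
    · exact absurd (sub_eq_zero.1 h3).symm hij
  · intro he
    ext i j
    rw [mul_diagonal, diagonal_mul]
    by_cases hij : d i = d j
    · rw [hij, mul_comm]
    · rw [he i j hij, zero_mul, mul_zero]



/-- conjugation of matrices by a unit -/
noncomputable def cnj (g : (Matrix (Fin n) (Fin n) k)ˣ) (M : Matrix (Fin n) (Fin n) k) :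
    Matrix (Fin n) (Fin n) k :=
  (g : Matrix (Fin n) (Fin n) k) * M * ((g⁻¹ : (Matrix (Fin n) (Fin n) k)ˣ) : Matrix (Fin n) (Fin n) k)

theorem cnj_mul (g : (Matrix (Fin n) (Fin n) k)ˣ) (M N : Matrix (Fin n) (Fin n) k) :
    cnj g (M * N) = cnj g M * cnj g N := by
  unfold cnj
  have : ((g⁻¹ : (Matrix (Fin n) (Fin n) k)ˣ) : Matrix (Fin n) (Fin n) k) * (g : Matrix (Fin n) (Fin n) k) = 1 := by
    rw [← Units.val_mul, inv_mul_cancel, Units.val_one]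
  simp only [Matrix.mul_assoc]
  rw [← Matrix.mul_assoc ((g⁻¹ : (Matrix (Fin n) (Fin n) k)ˣ) : Matrix (Fin n) (Fin n) k) (g : Matrix (Fin n) (Fin n) k), this, Matrix.one_mul]

theorem cnj_cnj (g : (Matrix (Fin n) (Fin n) k)ˣ) (M : Matrix (Fin n) (Fin n) k) :
    cnj g⁻¹ (cnj g M) = M := by
  unfold cnj
  have h1 : ((g⁻¹ : (Matrix (Fin n) (Fin n) k)ˣ) : Matrix (Fin n) (Fin n) k) * (g : Matrix (Fin n) (Fin n) k) = 1 := by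
    rw [← Units.val_mul, inv_mul_cancel, Units.val_one]
  simp only [inv_inv]
  calc ((g⁻¹ : (Matrix (Fin n) (Fin n) k)ˣ) : Matrix (Fin n) (Fin n) k) * ((g : Matrix (Fin n) (Fin n) k) * M * ((g⁻¹ : (Matrix (Fin n) (Fin n) k)ˣ) : Matrix (Fin n) (Fin n) k)) * (g : Matrix (Fin n) (Fin n) k)
      = (((g⁻¹ : (Matrix (Fin n) (Fin n) k)ˣ) : Matrix (Fin n) (Fin n) k) * (g : Matrix (Fin n) (Fin n) k)) * M * (((g⁻¹ : (Matrix (Fin n) (Fin n) k)ˣ) : Matrix (Fin n) (Fin n) k) * (g : Matrix (Fin n) (Fin n) k)) := by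
        simp [Matrix.mul_assoc]
  _ = M := by rw [h1]; simp

theorem cnj_cnj' (g : (Matrix (Fin n) (Fin n) k)ˣ) (M : Matrix (Fin n) (Fin n) k) :
    cnj g (cnj g⁻¹ M) = M := by
  have := cnj_cnj g⁻¹ M
  rwa [inv_inv] at this

theorem cnj_zero (g : (Matrix (Fin n) (Fin n) k)ˣ) : cnj g 0 = 0 := by
  unfold cnj; simp

theorem cnj_inj (g : (Matrix (Fin n) (Fin n) k)ˣ) : Function.Injective (cnj g) := by
  intro M N h
  have := congrArg (cnj g⁻¹) h
  rwa [cnj_cnj, cnj_cnj] at this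

theorem cnj_unit (g h : (Matrix (Fin n) (Fin n) k)ˣ) :
    cnj g (h : Matrix (Fin n) (Fin n) k) = ((g * h * g⁻¹ : (Matrix (Fin n) (Fin n) k)ˣ) : Matrix (Fin n) (Fin n) k) := by
  unfold cnj; simp [Units.val_mul]

theorem comm_conj (g : (Matrix (Fin n) (Fin n) k)ˣ) (X : Set (Matrix (Fin n) (Fin n) k)ˣ) :
    comm ((fun h => g * h * g⁻¹) '' X) = cnj g '' comm X := by
  ext M
  constructor
  · intro hM
    refine ⟨cnj g⁻¹ M, ?_, cnj_cnj' g M⟩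
    intro h hh
    have h1 := hM (g * h * g⁻¹) ⟨h, hh, rfl⟩
    have h2 : M * cnj g (h : Matrix (Fin n) (Fin n) k) = cnj g (h : Matrix (Fin n) (Fin n) k) * M := by
      rw [cnj_unit]; exact h1
    have h3 := congrArg (cnj g⁻¹) h2
    rw [cnj_mul, cnj_mul, cnj_cnj] at h3
    rw [h3]
  · rintro ⟨N, hN, rfl⟩ h ⟨h', hh', rfl⟩
    rw [← cnj_unit, ← cnj_mul, ← cnj_mul, hN h' hh']


theorem exists_inj_nonzero [Infinite k] :
    ∃ c : Fin n → k, Function.Injective c ∧ ∀ i, c i ≠ 0 := by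
  classical
  obtain ⟨c0⟩ : Nonempty (Fin n ↪ k) := ⟨(Fin.valEmbedding.trans (Infinite.natEmbedding k))⟩
  obtain ⟨a, ha⟩ := Infinite.exists_notMem_finset (Finset.univ.image (fun i => -c0 i))
  refine ⟨fun i => c0 i + a, fun i j hij => c0.injective (add_right_cancel hij), ?_⟩
  · intro i h0
    exact ha (Finset.mem_image.2 ⟨i, Finset.mem_univ i, by
      have : c0 i + a = 0 := h0
      linear_combination -this⟩)

theorem diagUnit_mem_SetA (d : Fin n → k) (c : Fin n → k) (hc : ∀ i, c i ≠ 0) :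
    diagUnit c hc ∈ SetA d := by
  intro i j hij
  have hne : i ≠ j := fun h => hij (by rw [h])
  show (diagonal c) i j = 0
  exact diagonal_apply_ne c hne

theorem transvUnit_mem_SetA (d : Fin n → k) (i j : Fin n) (hij : i ≠ j) (hd : d i = d j) :
    transvUnit i j hij ∈ SetA d := by
  intro a b hab
  have hne : a ≠ b := fun h => hab (by rw [h])
  show (1 + Matrix.single i j 1 : Matrix (Fin n) (Fin n) k) a b = 0
  rw [Matrix.add_apply, Matrix.one_apply_ne hne]
  rw [zero_add]
  apply Matrix.single_apply_of_ne
  rintro ⟨rfl, rfl⟩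
  exact hab hd

theorem comm_SetA [Infinite k] (d : Fin n → k) : comm (SetA d) = DSet d := by
  ext M
  constructor
  · intro hM
    obtain ⟨c, hcinj, hc0⟩ := exists_inj_nonzero (k := k) (n := n)
    have hdiag := hM (diagUnit c hc0) (diagUnit_mem_SetA d c hc0)
    have hoff : ∀ i j, i ≠ j → M i j = 0 := by
      intro i j hne
      have := Matrix.ext_iff.2 hdiag i j
      show M i j = 0
      have h1 : M i j * c j = c i * M i j := by
        simpa [diagUnit, mul_diagonal, diagonal_mul] using this
      have h2 : M i j * (c j - c i) = 0 := by ring_nf; linear_combination h1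
      rcases mul_eq_zero.1 h2 with h3 | h3
      · exact h3
      · exact absurd (hcinj (sub_eq_zero.1 h3)).symm hne
    refine ⟨hoff, ?_⟩
    intro i j hd
    rcases eq_or_ne i j with rfl | hne
    · rfl
    have htr := hM (transvUnit i j hne) (transvUnit_mem_SetA d i j hne hd)
    have h1 : M * (1 + Matrix.single i j 1) = (1 + Matrix.single i j 1) * M := htr
    have h2 : M * Matrix.single i j 1 = Matrix.single i j 1 * M := by
      have := h1
      rw [Matrix.mul_add, Matrix.add_mul, Matrix.mul_one, Matrix.one_mul] at this
      exact add_left_cancel this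
    have h3 := Matrix.ext_iff.2 h2 i j
    rw [Matrix.mul_single_apply_same, Matrix.single_mul_apply_same] at h3
    simpa using h3
  · rintro ⟨hoff, hdiag⟩ h hh
    ext a b
    rw [Matrix.mul_apply, Matrix.mul_apply]
    rw [Finset.sum_eq_single a, Finset.sum_eq_single b]
    · by_cases hab : d a = d b
      · rw [hdiag a b hab, mul_comm]
      · rw [hh a b hab, mul_zero, zero_mul]
    · intro c' _ hc'; rw [hoff c' b (by exact hc'), mul_zero]
    · intro hc; exact absurd (Finset.mem_univ b) hc
    · intro c' _ hc'; rw [hoff a c' (fun h' => hc' h'.symm), zero_mul]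
    · intro hc; exact absurd (Finset.mem_univ a) hc


theorem minIdem_cnj_sub (g : (Matrix (Fin n) (Fin n) k)ˣ) (D : Set (Matrix (Fin n) (Fin n) k)) :
    cnj g '' minIdem D ⊆ minIdem (cnj g '' D) := by
  rintro _ ⟨e, ⟨heD, heI, heNZ, heMin⟩, rfl⟩
  refine ⟨⟨e, heD, rfl⟩, by rw [← cnj_mul, heI], ?_, ?_⟩
  · intro h0
    exact heNZ (cnj_inj g (by rw [h0, cnj_zero]))
  · rintro _ ⟨e', he'D, rfl⟩ hI hle hNZ
    have h1 : e' * e' = e' := cnj_inj g (by rw [cnj_mul]; exact hI)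
    have h2 : e' * e = e' := cnj_inj g (by rw [cnj_mul]; exact hle)
    have h3 : e' ≠ 0 := fun h => hNZ (by rw [h, cnj_zero])
    rw [heMin e' he'D h1 h2 h3]

theorem minIdem_cnj (g : (Matrix (Fin n) (Fin n) k)ˣ) (D : Set (Matrix (Fin n) (Fin n) k)) :
    minIdem (cnj g '' D) = cnj g '' minIdem D := by
  apply Set.Subset.antisymm _ (minIdem_cnj_sub g D)
  intro e he
  have hD : D = cnj g⁻¹ '' (cnj g '' D) := by
    rw [← Set.image_comp]
    have : (cnj g⁻¹ ∘ cnj g) = id := funext (cnj_cnj g)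
    rw [this, Set.image_id]
  have := minIdem_cnj_sub g⁻¹ (cnj g '' D)
  rw [← hD] at this
  have h2 : cnj g⁻¹ e ∈ minIdem D := this ⟨e, he, rfl⟩
  exact ⟨cnj g⁻¹ e, h2, cnj_cnj' g e⟩

theorem indic_mem_DSet (d : Fin n → k) (v : k) : indic d v ∈ DSet d := by
  constructor
  · intro i j hij; exact diagonal_apply_ne _ hij
  · intro i j hd
    show diagonal _ i i = diagonal _ j j
    rw [diagonal_apply_eq, diagonal_apply_eq, hd]

theorem indic_idem (d : Fin n → k) (v : k) : indic d v * indic d v = indic d v := by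
  have h : (fun i => (if d i = v then (1:k) else 0) * (if d i = v then 1 else 0))
      = fun i => if d i = v then (1:k) else 0 := by
    funext i; by_cases h : d i = v <;> simp [h]
  unfold indic
  rw [diagonal_mul_diagonal, h]

theorem indic_apply_eq (d : Fin n → k) (v : k) (i : Fin n) :
    indic d v i i = if d i = v then 1 else 0 := diagonal_apply_eq _ i

theorem indic_ne_zero (d : Fin n → k) (i0 : Fin n) : indic d (d i0) ≠ 0 := by
  intro h
  have := Matrix.ext_iff.2 h i0 i0
  rw [indic_apply_eq, if_pos rfl] at this
  simpa using this

theorem diag_sq {e : Matrix (Fin n) (Fin n) k} (hoff : ∀ i j, i ≠ j → e i j = 0)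
    (hI : e * e = e) (i : Fin n) : e i i * e i i = e i i := by
  have h := Matrix.ext_iff.2 hI i i
  rw [Matrix.mul_apply, Finset.sum_eq_single i
    (fun b _ hb => by rw [hoff i b (fun h' => hb h'.symm), zero_mul])
    (fun h => absurd (Finset.mem_univ i) h)] at h
  exact h

theorem diag_nonzero_entry {e : Matrix (Fin n) (Fin n) k} (hoff : ∀ i j, i ≠ j → e i j = 0)
    (hNZ : e ≠ 0) : ∃ i, e i i ≠ 0 := by
  by_contra hall
  push_neg at hall
  apply hNZ
  ext a b
  rcases eq_or_ne a b with rfl | hne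
  · rw [hall a]; rfl
  · rw [hoff a b hne]; rfl

theorem idem_entry_one {e : Matrix (Fin n) (Fin n) k} (hoff : ∀ i j, i ≠ j → e i j = 0)
    (hI : e * e = e) {i : Fin n} (hi : e i i ≠ 0) : e i i = 1 := by
  rcases mul_eq_zero.1 (by linear_combination diag_sq hoff hI i :
      e i i * (e i i - 1) = 0) with h | h
  · exact absurd h hi
  · exact sub_eq_zero.1 h

theorem minIdem_DSet (d : Fin n → k) :
    minIdem (DSet d) = indic d '' Set.range d := by
  ext e
  constructor
  · rintro ⟨⟨hoff, hconst⟩, hI, hNZ, hMin⟩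
    obtain ⟨i0, hi0⟩ := diag_nonzero_entry hoff hNZ
    have hone : e i0 i0 = 1 := idem_entry_one hoff hI hi0
    refine ⟨d i0, ⟨i0, rfl⟩, ?_⟩
    have h1 : indic d (d i0) * e = indic d (d i0) := by
      ext a b
      rw [Matrix.mul_apply, Finset.sum_eq_single a
        (fun c' _ hc' => by
          rw [(indic_mem_DSet d (d i0)).1 a c' (fun h => hc' h.symm), zero_mul])
        (fun h => absurd (Finset.mem_univ a) h)]
      rcases eq_or_ne a b with rfl | hne
      · rw [indic_apply_eq]
        by_cases hda : d a = d i0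
        · rw [if_pos hda, one_mul, hconst a i0 hda, hone]
        · rw [if_neg hda, zero_mul]
      · rw [hoff a b hne, mul_zero, (indic_mem_DSet d (d i0)).1 a b hne]
    exact hMin (indic d (d i0)) (indic_mem_DSet d (d i0)) (indic_idem d (d i0)) h1
      (indic_ne_zero d i0)
  · rintro ⟨v, ⟨i0, rfl⟩, rfl⟩
    refine ⟨indic_mem_DSet d (d i0), indic_idem d (d i0), indic_ne_zero d i0, ?_⟩
    rintro e' ⟨hoff, hconst⟩ hI hle hNZ
    have hsupp : ∀ i, e' i i ≠ 0 → d i = d i0 := by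
      intro i hi
      have h := Matrix.ext_iff.2 hle i i
      rw [Matrix.mul_apply, Finset.sum_eq_single i
        (fun b _ hb => by rw [hoff i b (fun h' => hb h'.symm), zero_mul])
        (fun h => absurd (Finset.mem_univ i) h)] at h
      by_contra hd
      rw [indic_apply_eq, if_neg hd, mul_zero] at h
      exact hi h.symm
    obtain ⟨i1, hi1⟩ := diag_nonzero_entry hoff hNZ
    have hone1 : e' i1 i1 = 1 := idem_entry_one hoff hI hi1
    ext a b
    rcases eq_or_ne a b with rfl | hne
    · rw [indic_apply_eq]
      by_cases hda : d a = d i0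
      · rw [if_pos hda]
        have hd1 : d a = d i1 := by rw [hda, ← hsupp i1 hi1]
        rw [hconst a i1 hd1, hone1]
      · rw [if_neg hda]
        by_contra h0
        exact hda (hsupp a h0)
    · rw [hoff a b hne, (indic_mem_DSet d (d i0)).1 a b hne]


theorem rank_cnj (g : (Matrix (Fin n) (Fin n) k)ˣ) (M : Matrix (Fin n) (Fin n) k) :
    (cnj g M).rank = M.rank := by
  apply le_antisymm
  · calc (cnj g M).rank ≤ ((g : Matrix (Fin n) (Fin n) k) * M).rank :=
        Matrix.rank_mul_le_left _ _
    _ ≤ M.rank := Matrix.rank_mul_le_right _ _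
  · conv_lhs => rw [← cnj_cnj g M]
    calc (cnj g⁻¹ (cnj g M)).rank ≤ (((g⁻¹ : (Matrix (Fin n) (Fin n) k)ˣ) : Matrix (Fin n) (Fin n) k) * cnj g M).rank :=
        Matrix.rank_mul_le_left _ _
    _ ≤ (cnj g M).rank := Matrix.rank_mul_le_right _ _

theorem rank_indic (d : Fin n → k) (v : k) :
    (indic d v).rank = (Finset.univ.filter (fun i => d i = v)).card := by
  unfold indic
  rw [Matrix.rank_diagonal]
  rw [Fintype.card_subtype]
  congr 1
  apply Finset.filter_congr
  intro i _
  by_cases h : d i = v <;> simp [h]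

theorem indic_injOn (d : Fin n → k) : Set.InjOn (indic d) (Set.range d) := by
  rintro _ ⟨i, rfl⟩ w _ h
  have := Matrix.ext_iff.2 h i i
  rw [indic_apply_eq, indic_apply_eq, if_pos rfl] at this
  by_cases hw : d i = w
  · exact hw
  · rw [if_neg hw] at this; exact absurd this one_ne_zero

theorem rmul_diag [Infinite k] {u : (Matrix (Fin n) (Fin n) k)ˣ} {d : Fin n → k}
    (hu : (u : Matrix (Fin n) (Fin n) k) = diagonal d) : rmul u = fsm d := by
  have hset : minIdem (comm (ZSet u)) = indic d '' Set.range d := by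
    rw [zset_diag hu, comm_SetA, minIdem_DSet]
  have hfin : (minIdem (comm (ZSet u))).Finite := by
    rw [hset]; exact (Set.finite_range d).image _
  rw [rmul, dif_pos hfin]
  have hV : Set.range d = ↑(Finset.univ.image d) := by
    rw [Finset.coe_image, Finset.coe_univ, Set.image_univ]
  have htf : hfin.toFinset = (Finset.univ.image d).image (indic d) := by
    ext M
    rw [Set.Finite.mem_toFinset, hset, Finset.mem_image]
    constructor
    · rintro ⟨v, hv, rfl⟩
      rw [hV] at hv
      exact ⟨v, hv, rfl⟩
    · rintro ⟨v, hv, rfl⟩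
      exact ⟨v, by rw [hV]; exact_mod_cast hv, rfl⟩
  rw [htf, Finset.image_val_of_injOn (by
    intro a ha b hb hab
    apply indic_injOn d _ _ hab
    · rw [hV]; exact_mod_cast ha
    · rw [hV]; exact_mod_cast hb)]
  rw [Multiset.map_map, fsm]
  apply Multiset.map_congr rfl
  intro v _
  exact rank_indic d v

theorem rmul_rel {x y : (Matrix (Fin n) (Fin n) k)ˣ} {g : (Matrix (Fin n) (Fin n) k)ˣ}
    (hZ : ZSet y = (fun h => g * h * g⁻¹) '' ZSet x) : rmul y = rmul x := by
  have hcomm : comm (ZSet y) = cnj g '' comm (ZSet x) := by rw [hZ, comm_conj]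
  have hmin : minIdem (comm (ZSet y)) = cnj g '' minIdem (comm (ZSet x)) := by
    rw [hcomm, minIdem_cnj]
  by_cases hfx : (minIdem (comm (ZSet x))).Finite
  · have hfy : (minIdem (comm (ZSet y))).Finite := by rw [hmin]; exact hfx.image _
    rw [rmul, rmul, dif_pos hfx, dif_pos hfy]
    have htf : hfy.toFinset = hfx.toFinset.image (cnj g) := by
      ext M
      rw [Set.Finite.mem_toFinset, hmin, Finset.mem_image]
      constructor
      · rintro ⟨N, hN, rfl⟩; exact ⟨N, Set.Finite.mem_toFinset hfx |>.2 hN, rfl⟩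
      · rintro ⟨N, hN, rfl⟩; exact ⟨N, Set.Finite.mem_toFinset hfx |>.1 hN, rfl⟩
    rw [htf, Finset.image_val_of_injOn ((cnj_inj g).injOn), Multiset.map_map]
    apply Multiset.map_congr rfl
    intro N _
    exact rank_cnj g N
  · have hfy : ¬ (minIdem (comm (ZSet y))).Finite := by
      intro hf
      apply hfx
      have : minIdem (comm (ZSet x)) = cnj g⁻¹ '' minIdem (comm (ZSet y)) := by
        rw [hmin, ← Set.image_comp]
        have hc : (cnj g⁻¹ ∘ cnj g) = id := funext (cnj_cnj g)
        rw [hc, Set.image_id]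
      rw [this]; exact hf.image _
    rw [rmul, rmul, dif_neg hfx, dif_neg hfy]


theorem exists_bijOn_of_map_eq {α γ : Type*} [DecidableEq α] [DecidableEq γ] [Nonempty γ]
    (s : Finset α) (t : Finset γ) (f : α → ℕ) (g : γ → ℕ)
    (h : s.val.map f = t.val.map g) :
    ∃ β : α → γ, Set.BijOn β ↑s ↑t ∧ ∀ v ∈ s, g (β v) = f v := by
  classical
  induction s using Finset.induction_on generalizing t with
  | empty =>
    have ht : t = ∅ := by
      have : t.val.map g = 0 := by rw [← h]; simp
      have h2 : t.val = 0 := by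
        rcases Multiset.map_eq_zero.1 this with h2
        exact h2
      exact Finset.val_eq_zero.1 h2
    subst ht
    exact ⟨fun _ => Classical.arbitrary γ, by simp [Set.BijOn], by simp⟩
  | @insert a s' ha ih =>
    have hmem : f a ∈ t.val.map g := by
      rw [← h, Finset.insert_val_of_notMem ha, Multiset.map_cons]
      exact Multiset.mem_cons_self _ _
    obtain ⟨b, hb, hgb⟩ := Multiset.mem_map.1 hmem
    have hbt : b ∈ t := hb
    have hrest : s'.val.map f = (t.erase b).val.map g := by
      have h1 : (insert a s').val.map f = f a ::ₘ s'.val.map f := by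
        rw [Finset.insert_val_of_notMem ha, Multiset.map_cons]
      have h2 : t.val.map g = g b ::ₘ (t.erase b).val.map g := by
        rw [Finset.erase_val, ← Multiset.map_cons, Multiset.cons_erase hb]
      rw [h1, h2, hgb] at h
      exact (Multiset.cons_inj_right _).1 h
    obtain ⟨β', hβ'bij, hβ'⟩ := ih (t.erase b) hrest
    refine ⟨Function.update β' a b, ?_, ?_⟩
    · have hagree : Set.BijOn (Function.update β' a b) ↑s' ↑(t.erase b) := by
        apply Set.BijOn.congr hβ'bij
        intro x hx
        exact (Function.update_of_ne (fun he => ha (by rwa [he] at hx)) _ _).symm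
      have hins := Set.BijOn.insert hagree (by
        rw [Function.update_self]
        simp only [Finset.coe_erase, Set.mem_diff]
        rintro ⟨-, hbb⟩
        exact hbb rfl)
      rw [Function.update_self] at hins
      have hco : (insert b (↑(t.erase b)) : Set γ) = ↑t := by
        rw [← Finset.coe_insert, Finset.insert_erase hbt]
      rw [← Finset.coe_insert, hco] at hins
      exact hins
    · intro v hv
      rcases Finset.mem_insert.1 hv with rfl | hv'
      · rw [Function.update_self, hgb]
      · rw [Function.update_of_ne (fun he => ha (by rwa [he] at hv'))]
        exact hβ' v hv'


/-- from equal fiber-size multisets, a permutation matching the kernels -/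
theorem exists_perm_of_fsm_eq {d d' : Fin n → k} (h : fsm d = fsm d') :
    ∃ τ : Equiv.Perm (Fin n), ∀ i j, d' i = d' j ↔ d (τ i) = d (τ j) := by
  classical
  have hk : Nonempty k := ⟨0⟩
  obtain ⟨β, hbij, hsz⟩ := exists_bijOn_of_map_eq (Finset.univ.image d')
    (Finset.univ.image d) (fun v => (Finset.univ.filter (fun i => d' i = v)).card)
    (fun v => (Finset.univ.filter (fun i => d i = v)).card) (by rw [← fsm, ← fsm, h])
  -- fiberwise equivalences
  have hcard : ∀ v, v ∈ Finset.univ.image d' →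
      Fintype.card {i // d' i = v} = Fintype.card {j // d j = β v} := by
    intro v hv
    rw [Fintype.card_subtype, Fintype.card_subtype, hsz v hv]
  have hφ : ∀ v : k, v ∈ Finset.univ.image d' → ({i // d' i = v} ≃ {j // d j = β v}) := by
    intro v hv
    exact Fintype.equivOfCardEq (hcard v hv)
  have hmem : ∀ i : Fin n, d' i ∈ Finset.univ.image d' := fun i =>
    Finset.mem_image.2 ⟨i, Finset.mem_univ i, rfl⟩
  set τf : Fin n → Fin n := fun i => ↑(hφ (d' i) (hmem i) ⟨i, rfl⟩) with hτf
  have hdτ : ∀ i, d (τf i) = β (d' i) := fun i => (hφ (d' i) (hmem i) ⟨i, rfl⟩).2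
  have haux : ∀ (w : k) (hw : w ∈ Finset.univ.image d') (i : Fin n) (hi : d' i = w),
      τf i = ↑(hφ w hw ⟨i, hi⟩) := by
    intro w hw i hi
    subst hi
    rfl
  have hinj : Function.Injective τf := by
    intro i1 i2 he
    have hv : β (d' i1) = β (d' i2) := by rw [← hdτ i1, ← hdτ i2, he]
    have hveq : d' i1 = d' i2 := hbij.injOn (hmem i1) (hmem i2) hv
    rw [haux (d' i1) (hmem i1) i1 rfl, haux (d' i1) (hmem i1) i2 hveq.symm] at he
    have h2 := (hφ (d' i1) (hmem i1)).injective (Subtype.ext he)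
    exact congrArg Subtype.val h2
  have hbijf : Function.Bijective τf := (Finite.injective_iff_bijective).1 hinj
  refine ⟨Equiv.ofBijective τf hbijf, ?_⟩
  intro i j
  show d' i = d' j ↔ d (τf i) = d (τf j)
  rw [hdτ i, hdτ j]
  constructor
  · intro hij; rw [hij]
  · intro hij; exact hbij.injOn (hmem i) (hmem j) hij


theorem SetA_conj {d d' : Fin n → k} (τ : Equiv.Perm (Fin n))
    (hker : ∀ i j, d' i = d' j ↔ d (τ i) = d (τ j)) :
    ∃ P : (Matrix (Fin n) (Fin n) k)ˣ, SetA d' = (fun h => P * h * P⁻¹) '' SetA d := by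
  refine ⟨permUnit τ, ?_⟩
  set P := permUnit (k := k) τ with hP
  have hPval : (P : Matrix (Fin n) (Fin n) k) = τ.toPEquiv.toMatrix := rfl
  have hPinv : ((P⁻¹ : (Matrix (Fin n) (Fin n) k)ˣ) : Matrix (Fin n) (Fin n) k)
      = τ.symm.toPEquiv.toMatrix := rfl
  have himg : ∀ h : (Matrix (Fin n) (Fin n) k)ˣ,
      (h ∈ (fun h => P * h * P⁻¹) '' SetA d) ↔ P⁻¹ * h * P ∈ SetA d := by
    intro h
    constructor
    · rintro ⟨h', hh', rfl⟩
      have : P⁻¹ * (P * h' * P⁻¹) * P = h' := by group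
      rwa [this]
    · intro hh
      exact ⟨P⁻¹ * h * P, hh, by group⟩
  ext h
  rw [himg h]
  have hval : ((P⁻¹ * h * P : (Matrix (Fin n) (Fin n) k)ˣ) : Matrix (Fin n) (Fin n) k)
      = ((h : Matrix (Fin n) (Fin n) k)).submatrix τ.symm τ.symm := by
    rw [Units.val_mul, Units.val_mul, hPinv, hPval]
    rw [PEquiv.toMatrix_toPEquiv_mul]
    rw [PEquiv.mul_toMatrix_toPEquiv (f := τ)]
    rw [Matrix.submatrix_submatrix]
    simp
  constructor
  · intro hh i j hij
    rw [hval]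
    have := hh (τ.symm i) (τ.symm j) (by
      intro hc
      apply hij
      have h2 := (hker (τ.symm i) (τ.symm j)).1 hc
      rwa [Equiv.apply_symm_apply, Equiv.apply_symm_apply] at h2)
    exact this
  · intro hh a b hab
    have := Matrix.ext_iff.2 hval (τ a) (τ b)
    rw [Matrix.submatrix_apply, Equiv.symm_apply_apply, Equiv.symm_apply_apply] at this
    rw [← this]
    exact hh (τ a) (τ b) (fun hc => hab ((hker a b).2 hc))

theorem fsm_sum (d : Fin n → k) : (fsm d).sum = n := by
  classical
  have h := Finset.card_eq_sum_card_image d (Finset.univ : Finset (Fin n))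
  rw [Finset.card_univ, Fintype.card_fin] at h
  rw [fsm]
  rw [show ((Finset.univ.image d).val.map
      (fun v => (Finset.univ.filter (fun i => d i = v)).card)).sum
    = ∑ v ∈ Finset.univ.image d, (Finset.univ.filter (fun i => d i = v)).card from rfl]
  exact h.symm

theorem fsm_pos (d : Fin n → k) : ∀ x ∈ fsm d, 0 < x := by
  classical
  intro x hx
  rw [fsm, Multiset.mem_map] at hx
  obtain ⟨v, hv, rfl⟩ := hx
  obtain ⟨i, _, hi⟩ := Finset.mem_image.1 (Finset.mem_def.2 hv)
  exact Finset.card_pos.2 ⟨i, Finset.mem_filter.2 ⟨Finset.mem_univ i, hi⟩⟩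


theorem exists_rep [Infinite k] (P : Nat.Partition n) :
    ∃ (u : (Matrix (Fin n) (Fin n) k)ˣ) (d : Fin n → k),
      (u : Matrix (Fin n) (Fin n) k) = diagonal d ∧ fsm d = P.parts := by
  classical
  set c : Composition n := ⟨P.parts.toList,
    fun hi => P.parts_pos (by rwa [Multiset.mem_toList] at hi),
    by rw [Multiset.sum_toList, P.parts_sum]⟩ with hc
  obtain ⟨cv, hcinj, hc0⟩ := exists_inj_nonzero (k := k) (n := n)
  set g : Fin c.length → k := fun m => cv (Fin.castLE c.length_le m) with hg
  have hginj : Function.Injective g := fun a b hab =>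
    Fin.castLE_injective c.length_le (hcinj hab)
  set d : Fin n → k := fun i => g (c.index i) with hd
  have hdz : ∀ i, d i ≠ 0 := fun i => hc0 _
  refine ⟨diagUnit d hdz, d, rfl, ?_⟩
  -- index is surjective
  have hsurj : Function.Surjective c.index := by
    intro m
    have hpos : 0 < c.blocksFun m := c.blocks_pos (c.blocksFun_mem_blocks m)
    exact ⟨c.embedding m ⟨0, hpos⟩, c.index_embedding m ⟨0, hpos⟩⟩
  have himage : Finset.univ.image d = Finset.univ.image g := by
    rw [hd]
    rw [show (fun i => g (c.index i)) = g ∘ c.index from rfl]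
    rw [← Finset.image_image, Finset.image_univ_of_surjective hsurj]
  have hfiber : ∀ m : Fin c.length,
      (Finset.univ.filter (fun i => d i = g m)).card = c.blocksFun m := by
    intro m
    have hfe : (Finset.univ.filter (fun i => d i = g m))
        = (Finset.univ.filter (fun i => c.index i = m)) := by
      apply Finset.filter_congr
      intro i _
      constructor
      · intro hdi; exact hginj hdi
      · intro hi; rw [hd]; simp only; rw [hi]
    rw [hfe, ← Fintype.card_subtype]
    have he1 : {i // c.index i = m} ≃ Set.range (c.embedding m) := by
      apply Equiv.subtypeEquivRight
      intro i
      rw [Composition.mem_range_embedding_iff']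
      exact ⟨fun h => h.symm, fun h => h.symm⟩
    rw [Fintype.card_congr he1, Set.card_range_of_injective (c.embedding m).injective,
      Fintype.card_fin]
  rw [fsm, himage, Finset.image_val_of_injOn hginj.injOn, Multiset.map_map]
  have : ((fun v => (Finset.univ.filter (fun i => d i = v)).card) ∘ g) = c.blocksFun := by
    funext m
    exact hfiber m
  rw [this]
  rw [Fin.univ_val_map]
  show ↑(List.ofFn c.blocks.get) = P.parts
  rw [List.ofFn_get]
  show ↑(P.parts.toList) = P.parts
  exact Multiset.coe_toList P.parts

end ZAux

/-- Over an algebraically closed field, the number of z-classes of semisimple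
(diagonalizable) elements of `GL(n, k)` is `p(n)`, the number of partitions of `n`. -/
theorem card_zClasses_semisimple_GL (k : Type*) [Field k] [IsAlgClosed k]
    (n : ℕ) (hn : 1 ≤ n) :
    Nat.card (zQuotSub {g : Matrix.GeneralLinearGroup (Fin n) k |
        ∃ (h : Matrix.GeneralLinearGroup (Fin n) k) (d : Fin n → k),
          ((h * g * h⁻¹ : Matrix.GeneralLinearGroup (Fin n) k) :
              Matrix (Fin n) (Fin n) k) = Matrix.diagonal d})
      = Fintype.card (Nat.Partition n) := by
  classical
  set G := (Matrix (Fin n) (Fin n) k)ˣ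
  set S : Set G := {g : G |
    ∃ (h : G) (d : Fin n → k),
      ((h * g * h⁻¹ : G) : Matrix (Fin n) (Fin n) k) = Matrix.diagonal d} with hS
  -- the canonical map from partitions to z-classes
  have hrepmem : ∀ P : Nat.Partition n, (ZAux.exists_rep (k := k) P).choose ∈ S := by
    intro P
    obtain ⟨d, hval, -⟩ := (ZAux.exists_rep (k := k) P).choose_spec
    exact ⟨1, d, by simpa using hval⟩
  set Gmap : Nat.Partition n → zQuotSub S := fun P =>
    Quot.mk _ (⟨(ZAux.exists_rep (k := k) P).choose, hrepmem P⟩ : S) with hGmap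
  -- the invariant map
  have hlift : ∀ (x y : S), (∃ g : G,
      {h : G | h * (y : G) = (y : G) * h}
        = (fun h => g * h * g⁻¹) '' {h : G | h * (x : G) = (x : G) * h}) →
      ZAux.rmul (x : G) = ZAux.rmul (y : G) := by
    rintro x y ⟨g, hg⟩
    exact (ZAux.rmul_rel (x := (x : G)) (y := (y : G)) (g := g) hg).symm
  set F : zQuotSub S → Multiset ℕ := Quot.lift (fun x : S => ZAux.rmul (x : G)) hlift with hF
  have hFG : ∀ P : Nat.Partition n, F (Gmap P) = P.parts := by
    intro P
    obtain ⟨d, hval, hfsm⟩ := (ZAux.exists_rep (k := k) P).choose_spec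
    have : F (Gmap P) = ZAux.rmul ((ZAux.exists_rep (k := k) P).choose : G) := rfl
    rw [this, ZAux.rmul_diag hval, hfsm]
  have hinj : Function.Injective Gmap := by
    intro P Q hPQ
    apply Nat.Partition.ext
    rw [← hFG P, ← hFG Q, hPQ]
  have hsurj : Function.Surjective Gmap := by
    intro q
    induction q using Quot.ind with
    | _ x =>
      obtain ⟨x0, hx0⟩ := x
      obtain ⟨h, dv, hdiag⟩ := hx0
      set y : G := h * x0 * h⁻¹ with hy
      have hymem : y ∈ S := ⟨1, dv, by simpa using hdiag⟩
      have hrel1 : Quot.mk _ (⟨x0, ⟨h, dv, hdiag⟩⟩ : S) = (Quot.mk _ (⟨y, hymem⟩ : S) : zQuotSub S) := by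
        apply Quot.sound
        exact ⟨h, ZAux.zset_conj x0 h⟩
      set P : Nat.Partition n := ⟨ZAux.fsm dv, fun {i} hi => ZAux.fsm_pos dv i hi, ZAux.fsm_sum dv⟩ with hP
      refine ⟨P, ?_⟩
      obtain ⟨dP, hvalP, hfsmP⟩ := (ZAux.exists_rep (k := k) P).choose_spec
      have hfeq : ZAux.fsm dP = ZAux.fsm dv := by rw [hfsmP]
      obtain ⟨τ, hker⟩ := ZAux.exists_perm_of_fsm_eq hfeq
      obtain ⟨PU, hPU⟩ := ZAux.SetA_conj τ hker
      have hZy : ZAux.ZSet y = ZAux.SetA dv := ZAux.zset_diag hdiag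
      have hZu : ZAux.ZSet ((ZAux.exists_rep (k := k) P).choose : G) = ZAux.SetA dP :=
        ZAux.zset_diag hvalP
      have hrel2 : Quot.mk _ (⟨(ZAux.exists_rep (k := k) P).choose, hrepmem P⟩ : S)
          = (Quot.mk _ (⟨y, hymem⟩ : S) : zQuotSub S) := by
        apply Quot.sound
        refine ⟨PU, ?_⟩
        show ZAux.ZSet y = (fun h => PU * h * PU⁻¹) '' ZAux.ZSet ((ZAux.exists_rep (k := k) P).choose : G)
        rw [hZy, hZu, hPU]
      show Gmap P = _
      exact hrel2.trans hrel1.symm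
  have hbij : Function.Bijective Gmap := ⟨hinj, hsurj⟩
  rw [← Nat.card_eq_fintype_card]
  exact (Nat.card_congr (Equiv.ofBijective Gmap hbij)).symm
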